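/- Let 𝒞 be a nonempty collection of compact subsets of the closed unit ball in ℝ^d closed under rescalings and Hausdorff convergence, and suppose the open half-line 𝒜(𝒞) = (α₀, ∞) of exponents α with H^α vanishing on all of 𝒞. Then for every α > α₀ one has lim_{r↓0} sup_{K∈𝒞} r^α N(K, r) = 0, where N(K, r) is the minimal number of open balls of radius r needed to cover K. -/

import Mathlib

open MeasureTheory Metric Set Filter Topology
open scoped ENNReal

noncomputable section

/-- `coverNum K r` is the minimal number of open balls of radius `r` needed to cover `K`. -/
def coverNum {X : Type*} [PseudoMetricSpace X] (K : Set X) (r : ℝ) : ℕ :=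
  sInf {n : ℕ | ∃ s : Finset X, s.card = n ∧ K ⊆ ⋃ x ∈ s, Metric.ball x r}

section Aux

variable {X : Type*} [MetricSpace X] [MeasurableSpace X] [BorelSpace X] [Nonempty X]

lemma cover_of_hausdorff_zero {K : Set X} (hK : IsCompact K) {β : ℝ} (hβ : 0 < β)
    (h0 : μH[β] K = 0) {θ η : ℝ} (hθ : 0 < θ) (hη : 0 < η) :
    ∃ (s : Finset ℕ) (c : ℕ → X) (rad : ℕ → ℝ),
      (∀ i ∈ s, c i ∈ K ∧ 0 < rad i ∧ rad i ≤ θ) ∧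
      (K ⊆ ⋃ i ∈ s, ball (c i) (rad i)) ∧ ∑ i ∈ s, rad i ^ β ≤ η := by
  classical
  set η₂ : ℝ := min (η / 2) (θ ^ β / 2) with hη₂def
  have hη₂ : 0 < η₂ := lt_min (by positivity) (by positivity)
  set θ' : ℝ := (θ ^ β / 2) ^ β⁻¹ with hθ'def
  have hθ' : 0 < θ' := by positivity
  have hθ'β : θ' ^ β = θ ^ β / 2 := Real.rpow_inv_rpow (by positivity) hβ.ne'
  rw [Measure.hausdorffMeasure_apply] at h0
  have h1 : (⨅ (t : ℕ → Set X) (_ : K ⊆ ⋃ n, t n)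
      (_ : ∀ n, EMetric.diam (t n) ≤ ENNReal.ofReal θ'),
      ∑' n, ⨆ _ : (t n).Nonempty, EMetric.diam (t n) ^ β) = 0 := by
    refine le_antisymm ?_ (zero_le)
    rw [← h0]
    exact le_trans
      (le_iSup (fun _ : 0 < ENNReal.ofReal θ' => ⨅ (t : ℕ → Set X) (_ : K ⊆ ⋃ n, t n)
        (_ : ∀ n, EMetric.diam (t n) ≤ ENNReal.ofReal θ'),
        ∑' n, ⨆ _ : (t n).Nonempty, EMetric.diam (t n) ^ β) (ENNReal.ofReal_pos.2 hθ'))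
      (le_iSup (fun r : ℝ≥0∞ => ⨆ _ : 0 < r, ⨅ (t : ℕ → Set X) (_ : K ⊆ ⋃ n, t n)
        (_ : ∀ n, EMetric.diam (t n) ≤ r),
        ∑' n, ⨆ _ : (t n).Nonempty, EMetric.diam (t n) ^ β) (ENNReal.ofReal θ'))
  have h2 : (⨅ (t : ℕ → Set X) (_ : K ⊆ ⋃ n, t n)
      (_ : ∀ n, EMetric.diam (t n) ≤ ENNReal.ofReal θ'),
      ∑' n, ⨆ _ : (t n).Nonempty, EMetric.diam (t n) ^ β) < ENNReal.ofReal η₂ := by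
    rw [h1]; exact ENNReal.ofReal_pos.2 hη₂
  rw [iInf_lt_iff] at h2
  obtain ⟨t, h2⟩ := h2
  rw [iInf_lt_iff] at h2
  obtain ⟨hcov, h2⟩ := h2
  rw [iInf_lt_iff] at h2
  obtain ⟨hdiam, hsum⟩ := h2
  set good : ℕ → Prop := fun n => (t n ∩ K).Nonempty with hgooddef
  set c : ℕ → X := fun n => if h : good n then h.choose else Classical.arbitrary X with hcdef
  have hcmem : ∀ n, good n → c n ∈ t n ∩ K := by
    intro n hn
    simp only [hcdef, dif_pos hn]
    exact hn.choose_spec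
  set dn : ℕ → ℝ := fun n => (EMetric.diam (t n)).toReal with hdndef
  set rad : ℕ → ℝ := fun n => (dn n ^ β + η₂ / 2 * (1 / 2) ^ n) ^ β⁻¹ with hraddef
  have hdfin : ∀ n, EMetric.diam (t n) ≠ ⊤ :=
    fun n => ((hdiam n).trans_lt ENNReal.ofReal_lt_top).ne
  have hdn0 : ∀ n, 0 ≤ dn n := fun n => ENNReal.toReal_nonneg
  have hdnθ' : ∀ n, dn n ≤ θ' := fun n => ENNReal.toReal_le_of_le_ofReal hθ'.le (hdiam n)
  have hradpos : ∀ n, 0 < rad n := by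
    intro n
    apply Real.rpow_pos_of_pos
    have : (0:ℝ) < η₂ / 2 * (1 / 2) ^ n := by positivity
    nlinarith [Real.rpow_nonneg (hdn0 n) β]
  have hradβ : ∀ n, rad n ^ β = dn n ^ β + η₂ / 2 * (1 / 2) ^ n := by
    intro n
    apply Real.rpow_inv_rpow _ hβ.ne'
    have : (0:ℝ) < η₂ / 2 * (1 / 2) ^ n := by positivity
    nlinarith [Real.rpow_nonneg (hdn0 n) β]
  have hdn_lt_rad : ∀ n, dn n < rad n := by
    intro n
    have h1 : dn n = (dn n ^ β) ^ β⁻¹ := (Real.rpow_rpow_inv (hdn0 n) hβ.ne').symm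
    rw [h1, hraddef]
    apply Real.rpow_lt_rpow (Real.rpow_nonneg (hdn0 n) β) _ (inv_pos.2 hβ)
    have : (0:ℝ) < η₂ / 2 * (1 / 2) ^ n := by positivity
    linarith
  have hradθ : ∀ n, rad n ≤ θ := by
    intro n
    have h1 : rad n ^ β ≤ θ ^ β := by
      rw [hradβ n]
      have e1 : dn n ^ β ≤ θ' ^ β := Real.rpow_le_rpow (hdn0 n) (hdnθ' n) hβ.le
      have e2 : η₂ / 2 * (1 / 2) ^ n ≤ θ ^ β / 2 := by
        have : ((1:ℝ) / 2) ^ n ≤ 1 := pow_le_one₀ (by norm_num) (by norm_num)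
        have h3 : η₂ ≤ θ ^ β / 2 := min_le_right _ _
        nlinarith
      rw [hθ'β] at e1
      linarith
    have h2 := Real.rpow_le_rpow (Real.rpow_nonneg (hradpos n).le β) h1 (inv_pos.2 hβ).le
    rwa [Real.rpow_rpow_inv (hradpos n).le hβ.ne', Real.rpow_rpow_inv hθ.le hβ.ne'] at h2
  have htsub : ∀ n, good n → t n ⊆ ball (c n) (rad n) := by
    intro n hn z hz
    have h1 : edist z (c n) ≤ EMetric.diam (t n) :=
      EMetric.edist_le_diam_of_mem hz (hcmem n hn).1
    have h2 : dist z (c n) ≤ dn n := by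
      rw [dist_edist]
      exact ENNReal.toReal_mono (hdfin n) h1
    exact mem_ball.2 (h2.trans_lt (hdn_lt_rad n))
  have hcover : K ⊆ ⋃ n : {n // good n}, ball (c n.1) (rad n.1) := by
    intro x hx
    obtain ⟨n, hn⟩ := mem_iUnion.1 (hcov hx)
    have hg : good n := ⟨x, hn, hx⟩
    exact mem_iUnion.2 ⟨⟨n, hg⟩, htsub n hg hn⟩
  obtain ⟨F, hF⟩ := hK.elim_finite_subcover (fun n : {n // good n} => ball (c n.1) (rad n.1))
    (fun _ => isOpen_ball) hcover
  refine ⟨F.image Subtype.val, c, rad, ?_, ?_, ?_⟩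
  · intro i hi
    obtain ⟨⟨n, hg⟩, _, rfl⟩ := Finset.mem_image.1 hi
    exact ⟨(hcmem n hg).2, hradpos n, hradθ n⟩
  · intro x hx
    obtain ⟨n, hnF, hn⟩ := mem_iUnion₂.1 (hF hx)
    exact mem_iUnion₂.2 ⟨n.1, Finset.mem_image_of_mem _ hnF, hn⟩
  · have hgood : ∀ i ∈ F.image Subtype.val, good i := by
      intro i hi
      obtain ⟨⟨n, hg⟩, _, rfl⟩ := Finset.mem_image.1 hi
      exact hg
    set s := F.image Subtype.val with hsdef
    have key : ∑ i ∈ s, rad i ^ β = (∑ i ∈ s, dn i ^ β) + ∑ i ∈ s, η₂ / 2 * (1 / 2) ^ i := by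
      rw [← Finset.sum_add_distrib]
      exact Finset.sum_congr rfl fun i _ => hradβ i
    have hd_sum : ∑ i ∈ s, dn i ^ β ≤ η₂ := by
      have e1 : ∀ i ∈ s, (EMetric.diam (t i)) ^ β ≤
          ⨆ _ : (t i).Nonempty, EMetric.diam (t i) ^ β := by
        intro i hi
        have : (t i).Nonempty := ((hgood i hi).mono (inter_subset_left)).mono (Subset.refl _)
        exact le_iSup (fun _ : (t i).Nonempty => EMetric.diam (t i) ^ β) this
      have e2 : ∑ i ∈ s, (EMetric.diam (t i)) ^ β ≤ ENNReal.ofReal η₂ :=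
        ((Finset.sum_le_sum e1).trans (ENNReal.sum_le_tsum s)).trans hsum.le
      have e3 : ∑ i ∈ s, dn i ^ β = (∑ i ∈ s, (EMetric.diam (t i)) ^ β).toReal := by
        rw [ENNReal.toReal_sum]
        · exact Finset.sum_congr rfl fun i _ => ENNReal.toReal_rpow _ _
        · exact fun i _ => (ENNReal.rpow_lt_top_of_nonneg hβ.le (hdfin i)).ne
      rw [e3]
      exact ENNReal.toReal_le_of_le_ofReal hη₂.le e2
    have hgeo : ∑ i ∈ s, η₂ / 2 * (1 / 2) ^ i ≤ η₂ := by
      rw [← Finset.mul_sum]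
      have h1 : ∑ i ∈ s, ((1:ℝ) / 2) ^ i ≤ 2 := by
        have := Summable.sum_le_tsum s (fun i _ => by positivity) summable_geometric_two
        rwa [tsum_geometric_two] at this
      nlinarith
    have : η₂ ≤ η / 2 := min_le_left _ _
    rw [key]; linarith


variable {d : ℕ}

lemma uniform_cover (𝒞 : Set (Set (EuclideanSpace ℝ (Fin d))))
    (hcpt : ∀ K ∈ 𝒞, IsCompact K ∧ K ⊆ closedBall (0 : EuclideanSpace ℝ (Fin d)) 1)
    (hhaus : ∀ (K : ℕ → Set (EuclideanSpace ℝ (Fin d)))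
      (L : Set (EuclideanSpace ℝ (Fin d))),
      (∀ k, K k ∈ 𝒞) → IsCompact L →
      Tendsto (fun k => EMetric.hausdorffEdist (K k) L) atTop (𝓝 0) → L ∈ 𝒞)
    {β : ℝ} (hβ : 0 < β) (hzero : ∀ K ∈ 𝒞, μH[β] K = 0) :
    ∃ ρ : ℝ, 0 < ρ ∧ ρ ≤ 1 / 4 ∧ ∀ K ∈ 𝒞, K.Nonempty →
      ∃ (s : Finset ℕ) (c : ℕ → EuclideanSpace ℝ (Fin d)) (rad : ℕ → ℝ),
        (∀ i ∈ s, c i ∈ closedBall (0 : EuclideanSpace ℝ (Fin d)) 1 ∧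
          ρ ≤ rad i ∧ rad i ≤ 1 / 4) ∧
        (K ⊆ ⋃ i ∈ s, ball (c i) (rad i)) ∧ ∑ i ∈ s, rad i ^ β ≤ 1 := by
  classical
  set B : Set (EuclideanSpace ℝ (Fin d)) := closedBall (0 : EuclideanSpace ℝ (Fin d)) 1 with hBdef
  haveI : CompactSpace B := isCompact_iff_compactSpace.1 (isCompact_closedBall 0 1)
  set 𝒮 : Set (TopologicalSpace.NonemptyCompacts B) :=
    {C | (Subtype.val '' (C : Set B)) ∈ 𝒞} with h𝒮def
  -- the class is closed, hence compact
  have hclosed : IsClosed 𝒮 := by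
    refine IsSeqClosed.isClosed ?_
    intro Ck C hCk hlim
    refine hhaus (fun k => Subtype.val '' (Ck k : Set B)) (Subtype.val '' (C : Set B)) hCk
      (C.isCompact.image continuous_subtype_val) ?_
    have h1 : ∀ k, EMetric.hausdorffEdist (Subtype.val '' (Ck k : Set B))
        (Subtype.val '' (C : Set B)) = edist (Ck k) C := by
      intro k
      rw [EMetric.hausdorffEdist, Metric.hausdorffEDist_image isometry_subtype_coe]
      rfl
    simp only [h1]
    have := hlim.edist (tendsto_const_nhds (x := C))
    simpa using this
  have hScompact : IsCompact 𝒮 := hclosed.isCompact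
  -- build a NonemptyCompacts avatar of any nonempty K ∈ 𝒞
  have mkC : ∀ K ∈ 𝒞, K.Nonempty → ∃ C : TopologicalSpace.NonemptyCompacts B,
      C ∈ 𝒮 ∧ Subtype.val '' (C : Set B) = K := by
    intro K hK hKne
    have hKB : K ⊆ B := (hcpt K hK).2
    have hcl : IsCompact (Subtype.val ⁻¹' K : Set B) :=
      ((hcpt K hK).1.isClosed.preimage continuous_subtype_val).isCompact
    have hne' : (Subtype.val ⁻¹' K : Set B).Nonempty := by
      obtain ⟨x, hx⟩ := hKne
      exact ⟨⟨x, hKB hx⟩, hx⟩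
    have himg : Subtype.val '' (Subtype.val ⁻¹' K : Set B) = K := by
      rw [Subtype.image_preimage_coe]
      exact inter_eq_self_of_subset_right hKB
    refine ⟨⟨⟨_, hcl⟩, hne'⟩, ?_, himg⟩
    show Subtype.val '' (Subtype.val ⁻¹' K : Set B) ∈ 𝒞
    rw [himg]; exact hK
  by_cases hKex : ∃ K ∈ 𝒞, K.Nonempty
  swap
  · refine ⟨1/4, by norm_num, le_refl _, fun K hK hKne => absurd ⟨K, hK, hKne⟩ hKex⟩
  -- choose covers for each C ∈ 𝒮
  have hdata : ∀ C : TopologicalSpace.NonemptyCompacts B,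
      ∃ (s : Finset ℕ) (c : ℕ → EuclideanSpace ℝ (Fin d)) (rad : ℕ → ℝ), C ∈ 𝒮 →
        (∀ i ∈ s, c i ∈ Subtype.val '' (C : Set B) ∧ 0 < rad i ∧ rad i ≤ 1/8) ∧
        ((Subtype.val '' (C : Set B)) ⊆ ⋃ i ∈ s, ball (c i) (rad i)) ∧
        ∑ i ∈ s, rad i ^ β ≤ (1/2 : ℝ) ^ β := by
    intro C
    by_cases hC : C ∈ 𝒮
    · obtain ⟨s, c, rad, h1, h2, h3⟩ := cover_of_hausdorff_zero
        (C.isCompact.image continuous_subtype_val) hβ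
        (hzero _ hC) (by norm_num : (0:ℝ) < 1/8)
        (Real.rpow_pos_of_pos (by norm_num) β : (0:ℝ) < (1/2 : ℝ) ^ β)
      exact ⟨s, c, rad, fun _ => ⟨h1, h2, h3⟩⟩
    · exact ⟨∅, fun _ => 0, fun _ => 1, fun h => absurd h hC⟩
  choose cs cc crad hcprop using hdata
  have hsne : ∀ C ∈ 𝒮, (cs C).Nonempty := by
    intro C hC
    have hne : (Subtype.val '' (C : Set B)).Nonempty := C.nonempty.image _
    obtain ⟨x, hx⟩ := hne
    obtain ⟨i, hi, _⟩ := mem_iUnion₂.1 ((hcprop C hC).2.1 hx)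
    exact ⟨i, hi⟩
  set eps : TopologicalSpace.NonemptyCompacts B → ℝ := fun C =>
    if h : (cs C).Nonempty then (cs C).inf' h (crad C) else 1 with hepsdef
  have hepspos : ∀ C ∈ 𝒮, 0 < eps C := by
    intro C hC
    rw [hepsdef]
    simp only [dif_pos (hsne C hC)]
    rw [Finset.lt_inf'_iff]
    exact fun i hi => ((hcprop C hC).1 i hi).2.1
  -- finite subcover
  have hcover : 𝒮 ⊆ ⋃ C ∈ 𝒮, ball C (eps C) := fun C hC =>
    mem_iUnion₂.2 ⟨C, hC, mem_ball_self (hepspos C hC)⟩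
  obtain ⟨b', hb'sub, hb'fin, hb'cov⟩ :=
    hScompact.elim_finite_subcover_image (fun C _ => isOpen_ball) hcover
  obtain ⟨K₀, hK₀, hK₀ne⟩ := hKex
  obtain ⟨C₀, hC₀S, _⟩ := mkC K₀ hK₀ hK₀ne
  have hb'ne : (hb'fin.toFinset).Nonempty := by
    obtain ⟨C', hC', _⟩ := mem_iUnion₂.1 (hb'cov hC₀S)
    exact ⟨C', hb'fin.mem_toFinset.2 hC'⟩
  set ρ : ℝ := min (1/4) (hb'fin.toFinset.inf' hb'ne eps) with hρdef
  have hρpos : 0 < ρ := by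
    rw [hρdef]
    refine lt_min (by norm_num) ?_
    rw [Finset.lt_inf'_iff]
    exact fun C hC => hepspos C (hb'sub (hb'fin.mem_toFinset.1 hC))
  refine ⟨ρ, hρpos, min_le_left _ _, ?_⟩
  intro K hK hKne
  obtain ⟨C, hCS, hCK⟩ := mkC K hK hKne
  obtain ⟨C', hC'b, hCball⟩ := mem_iUnion₂.1 (hb'cov hCS)
  have hC'S : C' ∈ 𝒮 := hb'sub hC'b
  obtain ⟨hprop1, hprop2, hprop3⟩ := hcprop C' hC'S
  have hepsC' : eps C' = (cs C').inf' (hsne C' hC'S) (crad C') := by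
    rw [hepsdef]; simp only [dif_pos (hsne C' hC'S)]
  have heps_le : ∀ i ∈ cs C', eps C' ≤ crad C' i := by
    intro i hi
    rw [hepsC']
    exact Finset.inf'_le _ hi
  refine ⟨cs C', cc C', fun i => 2 * crad C' i, ?_, ?_, ?_⟩
  · intro i hi
    obtain ⟨hc1, hc2, hc3⟩ := hprop1 i hi
    refine ⟨?_, ?_, by show 2 * crad C' i ≤ 1/4; linarith⟩
    · obtain ⟨z, hz, hzeq⟩ := hc1
      rw [← hzeq]; exact z.2
    · show ρ ≤ 2 * crad C' i
      have h1 : ρ ≤ eps C' := by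
        rw [hρdef]
        exact (min_le_right _ _).trans (Finset.inf'_le _ (hb'fin.mem_toFinset.2 hC'b))
      have := heps_le i hi
      linarith
  · -- covering
    intro y hy
    have hyB : y ∈ B := (hcpt K hK).2 hy
    have hyC : (⟨y, hyB⟩ : B) ∈ (C : Set B) := by
      have hmem : y ∈ Subtype.val '' (C : Set B) := hCK.symm ▸ hy
      obtain ⟨z, hz, hzeq⟩ := hmem
      have hz2 : (⟨y, hyB⟩ : B) = z := Subtype.ext hzeq.symm
      rw [hz2]; exact hz
    have hdist : hausdorffDist (C : Set B) (C' : Set B) < eps C' := by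
      have := mem_ball.1 hCball
      rwa [Metric.NonemptyCompacts.dist_eq] at this
    have hfin : EMetric.hausdorffEdist (C : Set B) (C' : Set B) ≠ ⊤ :=
      hausdorffEdist_ne_top_of_nonempty_of_bounded C.nonempty C'.nonempty
        C.isCompact.isBounded C'.isCompact.isBounded
    obtain ⟨z, hzC', hzd⟩ := exists_dist_lt_of_hausdorffDist_lt hyC hdist hfin
    have hzK : (z : EuclideanSpace ℝ (Fin d)) ∈ Subtype.val '' (C' : Set B) := ⟨z, hzC', rfl⟩
    obtain ⟨i, hi, hzi⟩ := mem_iUnion₂.1 (hprop2 hzK)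
    refine mem_iUnion₂.2 ⟨i, hi, mem_ball.2 ?_⟩
    show dist y (cc C' i) < 2 * crad C' i
    have h1 : dist y (z : EuclideanSpace ℝ (Fin d)) = dist (⟨y, hyB⟩ : B) z := by
      rw [Subtype.dist_eq]
    have h2 : dist (z : EuclideanSpace ℝ (Fin d)) (cc C' i) < crad C' i := mem_ball.1 hzi
    have h3 : eps C' ≤ crad C' i := heps_le i hi
    calc dist y (cc C' i) ≤ dist y (z : EuclideanSpace ℝ (Fin d))
          + dist (z : EuclideanSpace ℝ (Fin d)) (cc C' i) := dist_triangle _ _ _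
      _ < eps C' + crad C' i := by rw [h1]; exact add_lt_add hzd h2
      _ ≤ 2 * crad C' i := by linarith
  · -- sum
    have h1 : ∀ i ∈ cs C', (2 * crad C' i) ^ β = (2:ℝ) ^ β * crad C' i ^ β := by
      intro i hi
      exact Real.mul_rpow (by norm_num) ((hprop1 i hi).2.1.le)
    rw [Finset.sum_congr rfl h1, ← Finset.mul_sum]
    have h2 : (2:ℝ) ^ β * ∑ i ∈ cs C', crad C' i ^ β ≤ (2:ℝ) ^ β * (1/2:ℝ) ^ β :=
      mul_le_mul_of_nonneg_left hprop3 (Real.rpow_nonneg (by norm_num) β)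
    have h3 : (2:ℝ) ^ β * (1/2:ℝ) ^ β = 1 := by
      rw [← Real.mul_rpow (by norm_num) (by norm_num)]
      norm_num
    linarith

end Aux

section Aux2

variable {d : ℕ}

lemma rec_cover (𝒞 : Set (Set (EuclideanSpace ℝ (Fin d))))
    (hres : ∀ K ∈ 𝒞, ∀ x ∈ closedBall (0 : EuclideanSpace ℝ (Fin d)) 1,
      ∀ r : ℝ, 0 < r → r ≤ 1 →
        (((fun w => r⁻¹ • (w - x)) '' K) ∩ closedBall 0 1) ∈ 𝒞)
    {β ρ : ℝ} (hβ : 0 < β) (hρ : 0 < ρ) (hρ4 : ρ ≤ 1 / 4)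
    (hcov : ∀ K ∈ 𝒞, K.Nonempty →
      ∃ (s : Finset ℕ) (c : ℕ → EuclideanSpace ℝ (Fin d)) (rad : ℕ → ℝ),
        (∀ i ∈ s, c i ∈ closedBall (0 : EuclideanSpace ℝ (Fin d)) 1 ∧
          ρ ≤ rad i ∧ rad i ≤ 1 / 4) ∧
        (K ⊆ ⋃ i ∈ s, ball (c i) (rad i)) ∧ ∑ i ∈ s, rad i ^ β ≤ 1) :
    ∀ n : ℕ, ∀ K ∈ 𝒞, ∀ r : ℝ, 0 < r → r ≤ 1 → (1 / 4 : ℝ) ^ n ≤ r →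
      ∃ t : Finset (EuclideanSpace ℝ (Fin d)),
        K ⊆ ⋃ x ∈ t, ball x r ∧ (t.card : ℝ) * (ρ * r) ^ β ≤ 1 := by
  classical
  intro n
  induction n with
  | zero =>
    intro K hK r hr0 hr1 hrn
    rcases K.eq_empty_or_nonempty with hKe | hKne
    · exact ⟨∅, by simp [hKe], by simp⟩
    have hr : r = 1 := le_antisymm hr1 (by simpa using hrn)
    obtain ⟨s, c, rad, h1, h2, h3⟩ := hcov K hK hKne
    refine ⟨s.image c, ?_, ?_⟩
    · intro x hx
      obtain ⟨i, hi, hxi⟩ := mem_iUnion₂.1 (h2 hx)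
      refine mem_iUnion₂.2 ⟨c i, Finset.mem_image_of_mem _ hi, ?_⟩
      have : rad i < r := by have := (h1 i hi).2.2; rw [hr]; linarith
      exact mem_ball.2 ((mem_ball.1 hxi).trans this)
    · calc ((s.image c).card : ℝ) * (ρ * r) ^ β
          ≤ (s.card : ℝ) * (ρ * r) ^ β := by
            apply mul_le_mul_of_nonneg_right _ (Real.rpow_nonneg (by positivity) β)
            exact_mod_cast Finset.card_image_le
      _ = ∑ i ∈ s, (ρ * r) ^ β := by rw [Finset.sum_const, nsmul_eq_mul]
      _ ≤ ∑ i ∈ s, rad i ^ β := by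
            apply Finset.sum_le_sum
            intro i hi
            apply Real.rpow_le_rpow (by positivity) _ hβ.le
            have := (h1 i hi).2.1
            rw [hr]; linarith
      _ ≤ 1 := h3
  | succ n ih =>
    intro K hK r hr0 hr1 hrn
    rcases K.eq_empty_or_nonempty with hKe | hKne
    · exact ⟨∅, by simp [hKe], by simp⟩
    obtain ⟨s, c, rad, h1, h2, h3⟩ := hcov K hK hKne
    have H : ∀ i ∈ s, ∃ ti : Finset (EuclideanSpace ℝ (Fin d)),
        (K ∩ ball (c i) (rad i) ⊆ ⋃ x ∈ ti, ball x r) ∧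
        (ti.card : ℝ) * (ρ * r) ^ β ≤ rad i ^ β := by
      intro i hi
      obtain ⟨hc1, hc2, hc3⟩ := h1 i hi
      have hradpos : 0 < rad i := lt_of_lt_of_le hρ hc2
      by_cases hcase : rad i < r
      · refine ⟨{c i}, ?_, ?_⟩
        · intro w hw
          refine mem_iUnion₂.2 ⟨c i, Finset.mem_singleton_self _, ?_⟩
          exact mem_ball.2 ((mem_ball.1 hw.2).trans hcase)
        · simp only [Finset.card_singleton, Nat.cast_one, one_mul]
          apply Real.rpow_le_rpow (by positivity) _ hβ.le
          calc ρ * r ≤ ρ * 1 := by nlinarith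
            _ = ρ := mul_one ρ
            _ ≤ rad i := hc2
      · push_neg at hcase
        set L : Set (EuclideanSpace ℝ (Fin d)) :=
          ((fun w => (rad i)⁻¹ • (w - c i)) '' K) ∩ closedBall 0 1 with hLdef
        have hL : L ∈ 𝒞 := hres K hK (c i) hc1 (rad i) hradpos (by linarith)
        set r' : ℝ := r / rad i with hr'def
        have hr'0 : 0 < r' := div_pos hr0 hradpos
        have hr'1 : r' ≤ 1 := (div_le_one hradpos).2 hcase
        have hr'n : (1 / 4 : ℝ) ^ n ≤ r' := by
          rw [hr'def, le_div_iff₀ hradpos]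
          calc (1/4 : ℝ) ^ n * rad i ≤ (1/4 : ℝ) ^ n * (1/4) := by
                apply mul_le_mul_of_nonneg_left hc3 (by positivity)
            _ = (1/4 : ℝ) ^ (n + 1) := by ring
            _ ≤ r := hrn
        obtain ⟨t', ht'cov, ht'card⟩ := ih L hL r' hr'0 hr'1 hr'n
        refine ⟨t'.image (fun y => c i + rad i • y), ?_, ?_⟩
        · intro w hw
          set y : EuclideanSpace ℝ (Fin d) := (rad i)⁻¹ • (w - c i) with hydef
          have hwy : w = c i + rad i • y := by
            rw [hydef, smul_inv_smul₀ hradpos.ne']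
            abel
          have hyL : y ∈ L := by
            constructor
            · exact ⟨w, hw.1, rfl⟩
            · rw [mem_closedBall, dist_zero_right, hydef, norm_smul]
              have hwc : ‖w - c i‖ < rad i := by
                rw [← dist_eq_norm]; exact mem_ball.1 hw.2
              rw [norm_inv, Real.norm_eq_abs, abs_of_pos hradpos]
              rw [inv_mul_le_iff₀ hradpos]
              nlinarith
          obtain ⟨x', hx', hyx'⟩ := mem_iUnion₂.1 (ht'cov hyL)
          refine mem_iUnion₂.2 ⟨c i + rad i • x', Finset.mem_image_of_mem _ hx', ?_⟩
          rw [mem_ball, hwy, dist_add_left, dist_smul₀, Real.norm_eq_abs,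
            abs_of_pos hradpos]
          calc rad i * dist y x' < rad i * r' := by
                apply mul_lt_mul_of_pos_left (mem_ball.1 hyx') hradpos
            _ = r := by rw [hr'def, mul_comm]; exact div_mul_cancel₀ r hradpos.ne'
        · have hcard : ((t'.image (fun y => c i + rad i • y)).card : ℝ) ≤ (t'.card : ℝ) := by
            exact_mod_cast Finset.card_image_le
          have hsplit : (ρ * r) ^ β = (ρ * r') ^ β * rad i ^ β := by
            rw [← Real.mul_rpow (by positivity) hradpos.le]
            congr 1
            rw [hr'def]; field_simp
          rw [hsplit, ← mul_assoc]
          calc ((t'.image (fun y => c i + rad i • y)).card : ℝ) * (ρ * r') ^ β * rad i ^ β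
              ≤ (t'.card : ℝ) * (ρ * r') ^ β * rad i ^ β := by
                apply mul_le_mul_of_nonneg_right _ (Real.rpow_nonneg hradpos.le β)
                exact mul_le_mul_of_nonneg_right hcard (Real.rpow_nonneg (by positivity) β)
            _ ≤ 1 * rad i ^ β := by
                apply mul_le_mul_of_nonneg_right ht'card (Real.rpow_nonneg hradpos.le β)
            _ = rad i ^ β := one_mul _
    choose T hT using H
    refine ⟨s.attach.biUnion (fun i => T i.1 i.2), ?_, ?_⟩
    · intro w hw
      obtain ⟨i, hi, hwi⟩ := mem_iUnion₂.1 (h2 hw)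
      obtain ⟨x, hx, hwx⟩ := mem_iUnion₂.1 ((hT i hi).1 ⟨hw, hwi⟩)
      exact mem_iUnion₂.2 ⟨x, Finset.mem_biUnion.2 ⟨⟨i, hi⟩, Finset.mem_attach _ _, hx⟩, hwx⟩
    · calc ((s.attach.biUnion (fun i => T i.1 i.2)).card : ℝ) * (ρ * r) ^ β
          ≤ (∑ i ∈ s.attach, ((T i.1 i.2).card : ℝ)) * (ρ * r) ^ β := by
            apply mul_le_mul_of_nonneg_right _ (Real.rpow_nonneg (by positivity) β)
            exact_mod_cast Finset.card_biUnion_le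
      _ = ∑ i ∈ s.attach, ((T i.1 i.2).card : ℝ) * (ρ * r) ^ β := Finset.sum_mul _ _ _
      _ ≤ ∑ i ∈ s.attach, rad i.1 ^ β := Finset.sum_le_sum (fun i _ => (hT i.1 i.2).2)
      _ = ∑ i ∈ s, rad i ^ β := by rw [← Finset.sum_attach s (fun i => rad i ^ β)]
      _ ≤ 1 := h3

end Aux2

/-- In the setting of the Work Raccoon Lemma, if `𝒜(𝒞) = (α₀, ∞)`, then for every `α > α₀`
one has `lim_{r↓0} sup_{K ∈ 𝒞} r^α N(K, r) = 0`. -/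
theorem uniform_minkowski_content_vanishes (d : ℕ)
    (𝒞 : Set (Set (EuclideanSpace ℝ (Fin d))))
    (hne : 𝒞.Nonempty)
    (hcpt : ∀ K ∈ 𝒞, IsCompact K ∧ K ⊆ closedBall (0 : EuclideanSpace ℝ (Fin d)) 1)
    (hres : ∀ K ∈ 𝒞, ∀ x ∈ closedBall (0 : EuclideanSpace ℝ (Fin d)) 1,
      ∀ r : ℝ, 0 < r → r ≤ 1 →
        (((fun w => r⁻¹ • (w - x)) '' K) ∩ closedBall 0 1) ∈ 𝒞)
    (hhaus : ∀ (K : ℕ → Set (EuclideanSpace ℝ (Fin d)))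
      (L : Set (EuclideanSpace ℝ (Fin d))),
      (∀ k, K k ∈ 𝒞) → IsCompact L →
      Tendsto (fun k => EMetric.hausdorffEdist (K k) L) atTop (𝓝 0) → L ∈ 𝒞)
    (α₀ : ℝ)
    (hA : {α : ℝ | 0 ≤ α ∧ ∀ K ∈ 𝒞, μH[α] K = 0} = Set.Ioi α₀) :
    ∀ α : ℝ, α₀ < α →
      ∀ ε : ℝ, 0 < ε → ∃ δ : ℝ, 0 < δ ∧ ∀ r : ℝ, 0 < r → r < δ →
        ∀ K ∈ 𝒞, r ^ α * (coverNum K r : ℝ) < ε := by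
  intro α hα ε hε
  -- α₀ is nonnegative
  have hα₀ : 0 ≤ α₀ := by
    by_contra h
    push_neg at h
    have h1 : (α₀ / 2) ∈ Set.Ioi α₀ := by simp only [Set.mem_Ioi]; linarith
    rw [← hA] at h1
    linarith [h1.1]
  -- pick β strictly between α₀ and α
  set β : ℝ := (α₀ + min α (α₀ + 1)) / 2 with hβdef
  have hmin : α₀ < min α (α₀ + 1) := lt_min hα (by linarith)
  have hβ1 : α₀ < β := by rw [hβdef]; linarith
  have hβ2 : β < α := by
    have : β < min α (α₀ + 1) := by rw [hβdef]; linarith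
    exact this.trans_le (min_le_left _ _)
  have hβ0 : 0 < β := lt_of_le_of_lt hα₀ hβ1
  have hβA : 0 ≤ β ∧ ∀ K ∈ 𝒞, μH[β] K = 0 := by
    have : β ∈ {α : ℝ | 0 ≤ α ∧ ∀ K ∈ 𝒞, μH[α] K = 0} := by rw [hA]; exact hβ1
    exact this
  obtain ⟨ρ, hρ0, hρ4, hcov⟩ := uniform_cover 𝒞 hcpt hhaus hβ0 hβA.2
  -- uniform covering-number bound
  have key : ∀ r : ℝ, 0 < r → r ≤ 1 → ∀ K ∈ 𝒞, (coverNum K r : ℝ) * (ρ * r) ^ β ≤ 1 := by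
    intro r hr0 hr1 K hK
    obtain ⟨n, hn⟩ := exists_pow_lt_of_lt_one hr0 (by norm_num : (1/4 : ℝ) < 1)
    obtain ⟨t, htcov, htcard⟩ := rec_cover 𝒞 hres hβ0 hρ0 hρ4 hcov n K hK r hr0 hr1 hn.le
    have hN : coverNum K r ≤ t.card := Nat.sInf_le ⟨t, rfl, htcov⟩
    calc (coverNum K r : ℝ) * (ρ * r) ^ β ≤ (t.card : ℝ) * (ρ * r) ^ β := by
          apply mul_le_mul_of_nonneg_right _ (Real.rpow_nonneg (by positivity) β)
          exact_mod_cast hN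
      _ ≤ 1 := htcard
  -- choose δ
  set δ : ℝ := min 1 ((ε * ρ ^ β) ^ (α - β)⁻¹) with hδdef
  have hεico : 0 < ε * ρ ^ β := by positivity
  have hδ0 : 0 < δ := lt_min one_pos (Real.rpow_pos_of_pos hεico _)
  refine ⟨δ, hδ0, ?_⟩
  intro r hr0 hrδ K hK
  have hr1 : r ≤ 1 := le_of_lt (hrδ.trans_le (min_le_left _ _))
  have h1 := key r hr0 hr1 K hK
  set N : ℝ := (coverNum K r : ℝ) with hNdef
  have hN0 : 0 ≤ N := Nat.cast_nonneg _
  -- main estimate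
  have e0 : r ^ α = r ^ (α - β) * r ^ β := by
    rw [← Real.rpow_add hr0]; congr 1; ring
  have e1 : r ^ α * N * ρ ^ β = r ^ (α - β) * (N * (ρ * r) ^ β) := by
    rw [e0, Real.mul_rpow hρ0.le hr0.le]; ring
  have e2 : r ^ α * N * ρ ^ β ≤ r ^ (α - β) := by
    rw [e1]
    calc r ^ (α - β) * (N * (ρ * r) ^ β) ≤ r ^ (α - β) * 1 :=
          mul_le_mul_of_nonneg_left h1 (Real.rpow_nonneg hr0.le _)
      _ = r ^ (α - β) := mul_one _
  have e3 : r ^ (α - β) < ε * ρ ^ β := by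
    have h4 : r ^ (α - β) < δ ^ (α - β) :=
      Real.rpow_lt_rpow hr0.le hrδ (by linarith)
    have h5 : δ ^ (α - β) ≤ ((ε * ρ ^ β) ^ (α - β)⁻¹) ^ (α - β) :=
      Real.rpow_le_rpow hδ0.le (min_le_right _ _) (by linarith)
    rw [Real.rpow_inv_rpow hεico.le (by linarith : α - β ≠ 0)] at h5
    linarith
  have e4 : r ^ α * N * ρ ^ β < (ε * ρ ^ β) := lt_of_le_of_lt e2 e3
  have hρβ : 0 < ρ ^ β := Real.rpow_pos_of_pos hρ0 β
  calc r ^ α * N = r ^ α * N * ρ ^ β / ρ ^ β := by field_simp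
    _ < ε * ρ ^ β / ρ ^ β := (div_lt_div_iff_of_pos_right hρβ).2 e4
    _ = ε := by field_simp
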